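/- Under the base setup with estimated nuisances, if ḡ = g₀ a.s. and Ḡ = G₀ a.s., then for every choice of Q̄ and Q̄ᵥ one has Ψ̄ + E[(1{A ≥ v}·Δ/(ḡ·Ḡ))·(Y − Q̄)] + E[(1{A ≥ v}/ḡ)·(Q̄ − Q̄ᵥ)] = Ψ₀; i.e., the one-step/targeted population value recovers the true threshold-response when the propensity-type nuisances are correctly specified (double robustness, first case of Theorem 2). -/

import Mathlib

open MeasureTheory ProbabilityTheory

lemma pull_out {Ω : Type*} {mΩ : MeasurableSpace Ω} {m : MeasurableSpace Ω} (hm : m ≤ mΩ)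
    (μ : @Measure Ω mΩ) [IsFiniteMeasure μ] {f g : Ω → ℝ} (hf : StronglyMeasurable[m] f)
    (hg : Integrable g μ) (c : ℝ) (hfb : ∀ ω, ‖f ω‖ ≤ c) :
    ∫ ω, f ω * g ω ∂μ = ∫ ω, f ω * (μ[g|m]) ω ∂μ := by
  have h1 := condExp_stronglyMeasurable_mul_of_bound hm hf hg c (ae_of_all μ hfb)
  have h2 : ∫ ω, (μ[f * g|m]) ω ∂μ = ∫ ω, (f * g) ω ∂μ := integral_condExp hm
  calc ∫ ω, f ω * g ω ∂μ = ∫ ω, (f * g) ω ∂μ := rfl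
    _ = ∫ ω, (μ[f * g|m]) ω ∂μ := h2.symm
    _ = ∫ ω, (f * μ[g|m]) ω ∂μ := integral_congr_ae h1
    _ = ∫ ω, f ω * (μ[g|m]) ω ∂μ := rfl

lemma bdd_int {Ω : Type*} {mΩ : MeasurableSpace Ω} (μ : @Measure Ω mΩ) [IsFiniteMeasure μ]
    {f : Ω → ℝ} (hf : AEStronglyMeasurable f μ) (C : ℝ) (hC : ∀ᵐ ω ∂μ, |f ω| ≤ C) :
    Integrable f μ :=
  (integrable_const C).mono' hf (by simpa [Real.norm_eq_abs] using hC)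

/-- double robustness, first case: if `ḡ = g₀` a.s. and `Ḡ = G₀` a.s.,
then the one-step/targeted population value recovers `Ψ₀` for every `Q̄`, `Q̄ᵥ`. -/
theorem stmt10
    {Ω 𝒲 : Type*} [mΩ : MeasurableSpace Ω] [MeasurableSpace 𝒲]
    (μ : Measure Ω) [IsProbabilityMeasure μ]
    (W : Ω → 𝒲) (A Δ Y : Ω → ℝ)
    (hWmeas : Measurable W) (hAmeas : Measurable A)
    (hΔmeas : Measurable Δ) (hYmeas : Measurable Y)
    (hΔ01 : ∀ ω, Δ ω = 0 ∨ Δ ω = 1) (hY01 : ∀ ω, Y ω ∈ Set.Icc (0 : ℝ) 1)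
    (v δ : ℝ) (hδ0 : 0 < δ) (hδ1 : δ < 1)
    (m0 m1 m2 : MeasurableSpace Ω)
    (hm0 : m0 = MeasurableSpace.comap W inferInstance)
    (hm1 : m1 = MeasurableSpace.comap (fun ω => (A ω, W ω)) inferInstance)
    (hm2 : m2 = MeasurableSpace.comap (fun ω => (A ω, W ω, Δ ω)) inferInstance)
    (G₀ g₀ Q₀ Q₀ᵥ : Ω → ℝ) (Ψ₀ : ℝ)
    (hG₀ : G₀ = μ[Δ | m1])
    (hg₀ : g₀ = μ[fun ω => if v ≤ A ω then (1 : ℝ) else 0 | m0])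
    (hQ₀ : Q₀ = fun ω => ((μ[fun ω' => Y ω' * Δ ω' | m1]) ω) / G₀ ω)
    (hQ₀ᵥ : Q₀ᵥ = fun ω =>
      ((μ[fun ω' => Q₀ ω' * (if v ≤ A ω' then (1 : ℝ) else 0) | m0]) ω) / g₀ ω)
    (hΨ₀ : Ψ₀ = ∫ ω, Q₀ᵥ ω ∂μ)
    (hG₀pos : ∀ᵐ ω ∂μ, δ ≤ G₀ ω)
    (hg₀pos : ∀ᵐ ω ∂μ, δ ≤ g₀ ω)
    (Gbar gbar Qbar Qbarv : Ω → ℝ)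
    (hGbarMeas : Measurable[m1] Gbar) (hgbarMeas : Measurable[m0] gbar)
    (hQbarMeas : Measurable[m1] Qbar) (hQbarvMeas : Measurable[m0] Qbarv)
    (hGbarB : ∀ ω, Gbar ω ∈ Set.Icc δ 1) (hgbarB : ∀ ω, gbar ω ∈ Set.Icc δ 1)
    (hQbarB : ∀ ω, Qbar ω ∈ Set.Icc (0 : ℝ) 1) (hQbarvB : ∀ ω, Qbarv ω ∈ Set.Icc (0 : ℝ) 1)
    (Psibar : ℝ) (hPsibar : Psibar = ∫ ω, Qbarv ω ∂μ)
    (hgbarEq : gbar =ᵐ[μ] g₀) (hGbarEq : Gbar =ᵐ[μ] G₀) :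
    Psibar
      + ∫ ω, ((if v ≤ A ω then (1 : ℝ) else 0) * Δ ω / (gbar ω * Gbar ω)) * (Y ω - Qbar ω) ∂μ
      + ∫ ω, ((if v ≤ A ω then (1 : ℝ) else 0) / gbar ω) * (Qbar ω - Qbarv ω) ∂μ
      = Ψ₀ := by
  -- sub-σ-algebra facts
  have hm0le : m0 ≤ mΩ := by rw [hm0]; exact hWmeas.comap_le
  have hm1le : m1 ≤ mΩ := by rw [hm1]; exact (hAmeas.prodMk hWmeas).comap_le
  have hm01 : m0 ≤ m1 := by
    rw [hm0, hm1]
    calc MeasurableSpace.comap W inferInstance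
        = MeasurableSpace.comap (fun ω => (A ω, W ω))
            (MeasurableSpace.comap Prod.snd inferInstance) := by
          rw [MeasurableSpace.comap_comp]; rfl
      _ ≤ MeasurableSpace.comap (fun ω => (A ω, W ω)) inferInstance :=
          MeasurableSpace.comap_mono measurable_snd.comap_le
  -- measurability
  have hpair : Measurable[m1] (fun ω => (A ω, W ω)) := by
    rw [hm1]; exact Measurable.of_comap_le le_rfl
  have hAm1 : Measurable[m1] A := measurable_fst.comp hpair
  have hIm1 : Measurable[m1] (fun ω => if v ≤ A ω then (1 : ℝ) else 0) :=
    Measurable.ite (measurableSet_le measurable_const hAm1) measurable_const measurable_const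
  have hgbarm1 : Measurable[m1] gbar := hgbarMeas.mono hm01 le_rfl
  have hIM : Measurable[mΩ] (fun ω => if v ≤ A ω then (1 : ℝ) else 0) := hIm1.mono hm1le le_rfl
  have hgbarM : Measurable[mΩ] gbar := hgbarMeas.mono hm0le le_rfl
  have hGbarM : Measurable[mΩ] Gbar := hGbarMeas.mono hm1le le_rfl
  have hQbarM : Measurable[mΩ] Qbar := hQbarMeas.mono hm1le le_rfl
  have hQbarvM : Measurable[mΩ] Qbarv := hQbarvMeas.mono hm0le le_rfl
  have hG₀M : Measurable[mΩ] G₀ := by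
    rw [hG₀]; exact (stronglyMeasurable_condExp.mono hm1le).measurable
  have hQ₀M : Measurable[mΩ] Q₀ := by
    rw [hQ₀]; exact ((stronglyMeasurable_condExp.mono hm1le).measurable).div hG₀M
  -- pointwise bounds
  have hΔb : ∀ ω, 0 ≤ Δ ω ∧ Δ ω ≤ 1 := fun ω => by rcases hΔ01 ω with h | h <;> simp [h]
  have hIb : ∀ ω, 0 ≤ (if v ≤ A ω then (1 : ℝ) else 0) ∧
      (if v ≤ A ω then (1 : ℝ) else 0) ≤ 1 := fun ω => by split <;> norm_num
  have hgne : ∀ ω, gbar ω ≠ 0 := fun ω => ne_of_gt (lt_of_lt_of_le hδ0 (hgbarB ω).1)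
  have hGne : ∀ ω, Gbar ω ≠ 0 := fun ω => ne_of_gt (lt_of_lt_of_le hδ0 (hGbarB ω).1)
  have key_bd : ∀ x y z : ℝ, |x| ≤ 1 → δ ≤ y → δ ≤ z → |x / (y * z)| ≤ 1 / (δ * δ) := by
    intro x y z hx hy hz
    rw [abs_div, abs_of_pos (by nlinarith : (0 : ℝ) < y * z)]
    exact div_le_div₀ zero_le_one hx (by nlinarith) (by nlinarith)
  have key_bd2 : ∀ x y : ℝ, |x| ≤ 1 → δ ≤ y → |x / y| ≤ 1 / δ := by
    intro x y hx hy
    rw [abs_div, abs_of_pos (by nlinarith : (0 : ℝ) < y)]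
    exact div_le_div₀ zero_le_one hx hδ0 hy
  have habs01 : ∀ x : ℝ, 0 ≤ x → x ≤ 1 → |x| ≤ 1 := fun x h0 h1 => by rw [abs_of_nonneg h0]; exact h1
  -- the two m1-measurable "weights"
  have hfa_sm : StronglyMeasurable[m1]
      (fun ω => (if v ≤ A ω then (1 : ℝ) else 0) / (gbar ω * Gbar ω)) :=
    (hIm1.div (hgbarm1.mul hGbarMeas)).stronglyMeasurable
  have hfa_bd : ∀ ω, ‖(if v ≤ A ω then (1 : ℝ) else 0) / (gbar ω * Gbar ω)‖ ≤ 1 / (δ * δ) :=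
    fun ω => by
      rw [Real.norm_eq_abs]
      exact key_bd _ _ _ (habs01 _ (hIb ω).1 (hIb ω).2) (hgbarB ω).1 (hGbarB ω).1
  have hfb_sm : StronglyMeasurable[m1]
      (fun ω => (if v ≤ A ω then (1 : ℝ) else 0) * Qbar ω / (gbar ω * Gbar ω)) :=
    ((hIm1.mul hQbarMeas).div (hgbarm1.mul hGbarMeas)).stronglyMeasurable
  have hfb_bd : ∀ ω, ‖(if v ≤ A ω then (1 : ℝ) else 0) * Qbar ω / (gbar ω * Gbar ω)‖
      ≤ 1 / (δ * δ) := fun ω => by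
    rw [Real.norm_eq_abs]
    refine key_bd _ _ _ ?_ (hgbarB ω).1 (hGbarB ω).1
    exact habs01 _ (mul_nonneg (hIb ω).1 (hQbarB ω).1)
      (mul_le_one₀ (hIb ω).2 (hQbarB ω).1 (hQbarB ω).2)
  -- integrabilities
  have intYΔ : Integrable (fun ω => Y ω * Δ ω) μ := by
    refine bdd_int μ ((hYmeas.mul hΔmeas).aestronglyMeasurable) 1 (ae_of_all _ fun ω => ?_)
    exact habs01 _ (mul_nonneg (hY01 ω).1 (hΔb ω).1) (mul_le_one₀ (hY01 ω).2 (hΔb ω).1 (hΔb ω).2)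
  have intΔ : Integrable Δ μ :=
    bdd_int μ hΔmeas.aestronglyMeasurable 1 (ae_of_all _ fun ω => habs01 _ (hΔb ω).1 (hΔb ω).2)
  have intI : Integrable (fun ω => if v ≤ A ω then (1 : ℝ) else 0) μ :=
    bdd_int μ hIM.aestronglyMeasurable 1 (ae_of_all _ fun ω => habs01 _ (hIb ω).1 (hIb ω).2)
  -- a.e. bounds on the conditional expectation of YΔ
  have h1nn : 0 ≤ᵐ[μ] μ[fun ω' => Y ω' * Δ ω' | m1] :=
    condExp_nonneg (ae_of_all _ fun ω => mul_nonneg (hY01 ω).1 (hΔb ω).1)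
  have h1le : μ[fun ω' => Y ω' * Δ ω' | m1] ≤ᵐ[μ] fun _ => (1 : ℝ) := by
    have h := condExp_mono (μ := μ) (m := m1) intYΔ (integrable_const 1)
      (ae_of_all _ fun ω => mul_le_one₀ (hY01 ω).2 (hΔb ω).1 (hΔb ω).2)
    rwa [condExp_const hm1le] at h
  have hQ₀bd : ∀ᵐ ω ∂μ, |Q₀ ω| ≤ 1 / δ := by
    filter_upwards [h1nn, h1le, hG₀pos] with ω h0 h1 hG
    rw [hQ₀]
    exact key_bd2 _ _ (habs01 _ h0 h1) hG
  have intQ₀I : Integrable (fun ω => Q₀ ω * (if v ≤ A ω then (1 : ℝ) else 0)) μ := by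
    refine bdd_int μ ((hQ₀M.mul hIM).aestronglyMeasurable) (1 / δ) ?_
    filter_upwards [hQ₀bd] with ω hb
    calc |Q₀ ω * (if v ≤ A ω then (1 : ℝ) else 0)|
        = |Q₀ ω| * |if v ≤ A ω then (1 : ℝ) else 0| := abs_mul _ _
      _ ≤ |Q₀ ω| * 1 := by
          exact mul_le_mul_of_nonneg_left (habs01 _ (hIb ω).1 (hIb ω).2) (abs_nonneg _)
      _ ≤ 1 / δ := by rw [mul_one]; exact hb
  -- STEP 1 : the first correction integral equals Ψ₀ - C
  have stepA : ∫ ω, ((if v ≤ A ω then (1 : ℝ) else 0) / (gbar ω * Gbar ω)) * (Y ω * Δ ω) ∂μ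
      = Ψ₀ := by
    have e1 : ∫ ω, ((if v ≤ A ω then (1 : ℝ) else 0) / (gbar ω * Gbar ω)) * (Y ω * Δ ω) ∂μ
        = ∫ ω, ((if v ≤ A ω then (1 : ℝ) else 0) / (gbar ω * Gbar ω))
            * (μ[fun ω' => Y ω' * Δ ω' | m1]) ω ∂μ :=
      pull_out hm1le μ hfa_sm intYΔ (1 / (δ * δ)) hfa_bd
    have e2 : (fun ω => ((if v ≤ A ω then (1 : ℝ) else 0) / (gbar ω * Gbar ω))
          * (μ[fun ω' => Y ω' * Δ ω' | m1]) ω)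
        =ᵐ[μ] fun ω => (gbar ω)⁻¹ * (Q₀ ω * (if v ≤ A ω then (1 : ℝ) else 0)) := by
      filter_upwards [hGbarEq, hG₀pos] with ω hGb hGp
      have hG0ne : G₀ ω ≠ 0 := ne_of_gt (lt_of_lt_of_le hδ0 hGp)
      simp only [hQ₀]
      rw [hGb]
      by_cases h : v ≤ A ω
      · simp only [if_pos h]; field_simp; try ring
      · simp [if_neg h]
    have e3 : ∫ ω, (gbar ω)⁻¹ * (Q₀ ω * (if v ≤ A ω then (1 : ℝ) else 0)) ∂μ
        = ∫ ω, (gbar ω)⁻¹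
            * (μ[fun ω' => Q₀ ω' * (if v ≤ A ω' then (1 : ℝ) else 0) | m0]) ω ∂μ := by
      refine pull_out hm0le μ (hgbarMeas.inv.stronglyMeasurable) intQ₀I (1 / δ) fun ω => ?_
      rw [Real.norm_eq_abs, abs_inv, abs_of_pos (lt_of_lt_of_le hδ0 (hgbarB ω).1), one_div]
      exact inv_anti₀ hδ0 (hgbarB ω).1
    have e4 : (fun ω => (gbar ω)⁻¹
          * (μ[fun ω' => Q₀ ω' * (if v ≤ A ω' then (1 : ℝ) else 0) | m0]) ω)
        =ᵐ[μ] Q₀ᵥ := by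
      filter_upwards [hgbarEq, hg₀pos] with ω hgb hgp
      have hg0ne : g₀ ω ≠ 0 := ne_of_gt (lt_of_lt_of_le hδ0 hgp)
      simp only [hQ₀ᵥ]
      rw [hgb]
      field_simp
    rw [e1, integral_congr_ae e2, e3, integral_congr_ae e4, hΨ₀]
  -- STEP 2
  have stepB : ∫ ω, ((if v ≤ A ω then (1 : ℝ) else 0) * Qbar ω / (gbar ω * Gbar ω)) * Δ ω ∂μ
      = ∫ ω, (if v ≤ A ω then (1 : ℝ) else 0) * Qbar ω / gbar ω ∂μ := by
    have e1 : ∫ ω, ((if v ≤ A ω then (1 : ℝ) else 0) * Qbar ω / (gbar ω * Gbar ω)) * Δ ω ∂μ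
        = ∫ ω, ((if v ≤ A ω then (1 : ℝ) else 0) * Qbar ω / (gbar ω * Gbar ω))
            * (μ[Δ | m1]) ω ∂μ :=
      pull_out hm1le μ hfb_sm intΔ (1 / (δ * δ)) hfb_bd
    have e2 : (fun ω => ((if v ≤ A ω then (1 : ℝ) else 0) * Qbar ω / (gbar ω * Gbar ω))
          * (μ[Δ | m1]) ω)
        =ᵐ[μ] fun ω => (if v ≤ A ω then (1 : ℝ) else 0) * Qbar ω / gbar ω := by
      filter_upwards [hGbarEq, hG₀pos] with ω hGb hGp
      have hG0ne : G₀ ω ≠ 0 := ne_of_gt (lt_of_lt_of_le hδ0 hGp)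
      rw [← hG₀, hGb]
      by_cases h : v ≤ A ω
      · simp only [if_pos h]
        have hc : G₀ ω * (G₀ ω)⁻¹ = 1 := mul_inv_cancel₀ hG0ne
        field_simp
      · simp [if_neg h]
    rw [e1, integral_congr_ae e2]
  -- STEP 3
  have stepC : ∫ ω, (Qbarv ω / gbar ω) * (if v ≤ A ω then (1 : ℝ) else 0) ∂μ = Psibar := by
    have e1 : ∫ ω, (Qbarv ω / gbar ω) * (if v ≤ A ω then (1 : ℝ) else 0) ∂μ
        = ∫ ω, (Qbarv ω / gbar ω)
            * (μ[fun ω' => if v ≤ A ω' then (1 : ℝ) else 0 | m0]) ω ∂μ := by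
      refine pull_out hm0le μ ((hQbarvMeas.div hgbarMeas).stronglyMeasurable) intI (1 / δ)
        fun ω => ?_
      rw [Real.norm_eq_abs]
      exact key_bd2 _ _ (habs01 _ (hQbarvB ω).1 (hQbarvB ω).2) (hgbarB ω).1
    have e2 : (fun ω => (Qbarv ω / gbar ω)
          * (μ[fun ω' => if v ≤ A ω' then (1 : ℝ) else 0 | m0]) ω) =ᵐ[μ] Qbarv := by
      filter_upwards [hgbarEq, hg₀pos] with ω hgb hgp
      have hg0ne : g₀ ω ≠ 0 := ne_of_gt (lt_of_lt_of_le hδ0 hgp)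
      rw [← hg₀, hgb]
      field_simp
    rw [e1, integral_congr_ae e2, hPsibar]
  -- split the two goal integrals
  have int_a : Integrable
      (fun ω => ((if v ≤ A ω then (1 : ℝ) else 0) / (gbar ω * Gbar ω)) * (Y ω * Δ ω)) μ := by
    refine bdd_int μ (((hIM.div (hgbarM.mul hGbarM)).mul
      (hYmeas.mul hΔmeas)).aestronglyMeasurable) (1 / (δ * δ)) (ae_of_all _ fun ω => ?_)
    calc |((if v ≤ A ω then (1 : ℝ) else 0) / (gbar ω * Gbar ω)) * (Y ω * Δ ω)|
        = |(if v ≤ A ω then (1 : ℝ) else 0) / (gbar ω * Gbar ω)| * |Y ω * Δ ω| := abs_mul _ _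
      _ ≤ (1 / (δ * δ)) * 1 := by
          refine mul_le_mul ?_ ?_ (abs_nonneg _) (by positivity)
          · rw [← Real.norm_eq_abs]; exact hfa_bd ω
          · exact habs01 _ (mul_nonneg (hY01 ω).1 (hΔb ω).1)
              (mul_le_one₀ (hY01 ω).2 (hΔb ω).1 (hΔb ω).2)
      _ = 1 / (δ * δ) := mul_one _
  have int_b : Integrable
      (fun ω => ((if v ≤ A ω then (1 : ℝ) else 0) * Qbar ω / (gbar ω * Gbar ω)) * Δ ω) μ := by
    refine bdd_int μ ((((hIM.mul hQbarM).div (hgbarM.mul hGbarM)).mul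
      hΔmeas).aestronglyMeasurable) (1 / (δ * δ)) (ae_of_all _ fun ω => ?_)
    calc |((if v ≤ A ω then (1 : ℝ) else 0) * Qbar ω / (gbar ω * Gbar ω)) * Δ ω|
        = |(if v ≤ A ω then (1 : ℝ) else 0) * Qbar ω / (gbar ω * Gbar ω)| * |Δ ω| := abs_mul _ _
      _ ≤ (1 / (δ * δ)) * 1 := by
          refine mul_le_mul ?_ ?_ (abs_nonneg _) (by positivity)
          · rw [← Real.norm_eq_abs]; exact hfb_bd ω
          · exact habs01 _ (hΔb ω).1 (hΔb ω).2
      _ = 1 / (δ * δ) := mul_one _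
  have int_c : Integrable
      (fun ω => (if v ≤ A ω then (1 : ℝ) else 0) * Qbar ω / gbar ω) μ := by
    refine bdd_int μ (((hIM.mul hQbarM).div hgbarM).aestronglyMeasurable) (1 / δ)
      (ae_of_all _ fun ω => ?_)
    refine key_bd2 _ _ ?_ (hgbarB ω).1
    exact habs01 _ (mul_nonneg (hIb ω).1 (hQbarB ω).1)
      (mul_le_one₀ (hIb ω).2 (hQbarB ω).1 (hQbarB ω).2)
  have int_d : Integrable
      (fun ω => (Qbarv ω / gbar ω) * (if v ≤ A ω then (1 : ℝ) else 0)) μ := by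
    refine bdd_int μ (((hQbarvM.div hgbarM).mul hIM).aestronglyMeasurable) (1 / δ)
      (ae_of_all _ fun ω => ?_)
    calc |(Qbarv ω / gbar ω) * (if v ≤ A ω then (1 : ℝ) else 0)|
        = |Qbarv ω / gbar ω| * |if v ≤ A ω then (1 : ℝ) else 0| := abs_mul _ _
      _ ≤ (1 / δ) * 1 := by
          refine mul_le_mul ?_ ?_ (abs_nonneg _) (by positivity)
          · exact key_bd2 _ _ (habs01 _ (hQbarvB ω).1 (hQbarvB ω).2) (hgbarB ω).1
          · exact habs01 _ (hIb ω).1 (hIb ω).2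
      _ = 1 / δ := mul_one _
  have split2 : ∫ ω, ((if v ≤ A ω then (1 : ℝ) else 0) * Δ ω / (gbar ω * Gbar ω))
        * (Y ω - Qbar ω) ∂μ
      = (∫ ω, ((if v ≤ A ω then (1 : ℝ) else 0) / (gbar ω * Gbar ω)) * (Y ω * Δ ω) ∂μ)
        - ∫ ω, ((if v ≤ A ω then (1 : ℝ) else 0) * Qbar ω / (gbar ω * Gbar ω)) * Δ ω ∂μ := by
    rw [← integral_sub int_a int_b]
    exact integral_congr_ae (ae_of_all _ fun ω => by ring)
  have split3 : ∫ ω, ((if v ≤ A ω then (1 : ℝ) else 0) / gbar ω) * (Qbar ω - Qbarv ω) ∂μ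
      = (∫ ω, (if v ≤ A ω then (1 : ℝ) else 0) * Qbar ω / gbar ω ∂μ)
        - ∫ ω, (Qbarv ω / gbar ω) * (if v ≤ A ω then (1 : ℝ) else 0) ∂μ := by
    rw [← integral_sub int_c int_d]
    exact integral_congr_ae (ae_of_all _ fun ω => by ring)
  rw [split2, split3, stepA, stepB, stepC]
  ring
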